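/- Let D be self-adjoint with spec(D²) ⊆ {0} ∪ [N−C, ∞), N > C, and let f be a bounded operator such that the commutator [D², f] = i(D·g + g·D) for some bounded operator g (formally g = γ^μ f_{|μ}). Then for all α > 0, ‖[f, (1+αD²)^{-1}]‖ ≤ 2 (N−C)^{-1/2} ‖g‖, and consequently ‖[f, Π]‖ ≤ 2 (N−C)^{-1/2} ‖g‖ + 2α^{-1}(N−C)^{-1}‖f‖ for every α > 0, whence ‖[f, Π]‖ ≤ 2 (N−C)^{-1/2} ‖g‖, where Π is the kernel projection of D. -/

import Mathlib

set_option maxHeartbeats 1000000 in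
lemma aux_resolvent {H : Type*} [NormedAddCommGroup H] [InnerProductSpace ℂ H] [CompleteSpace H]
    (D : H →L[ℂ] H) (hD : IsSelfAdjoint D) (N C : ℝ) (hNC : C < N)
    (hspecR : ∀ t ∈ spectrum ℝ (D ^ 2), t = 0 ∨ N - C ≤ t)
    (f g : H →L[ℂ] H)
    (hcomm : D ^ 2 * f - f * D ^ 2 = Complex.I • (D * g + g * D))
    (α : ℝ) (hα : 0 < α) :
    Ring.inverse (1 + (α : ℂ) • D ^ 2) = cfc (fun t : ℝ => (1 + α * t)⁻¹) (D ^ 2) ∧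
    ‖f * cfc (fun t : ℝ => (1 + α * t)⁻¹) (D ^ 2)
      - cfc (fun t : ℝ => (1 + α * t)⁻¹) (D ^ 2) * f‖ ≤ 2 * (Real.sqrt (N - C))⁻¹ * ‖g‖ := by
  have hNC' : (0:ℝ) < N - C := by linarith
  have hsa : IsSelfAdjoint (D ^ 2) := hD.pow 2
  set rf : ℝ → ℝ := fun t => (1 + α * t)⁻¹ with hrf
  set R : H →L[ℂ] H := cfc rf (D ^ 2) with hRdef
  set A : H →L[ℂ] H := 1 + (α : ℂ) • D ^ 2 with hAdef
  have hnneg : ∀ t ∈ spectrum ℝ (D ^ 2), 0 ≤ t := by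
    intro t ht; rcases hspecR t ht with h | h
    · simp [h]
    · linarith
  have hnz : ∀ t ∈ spectrum ℝ (D ^ 2), 1 + α * t ≠ 0 := by
    intro t ht; have := hnneg t ht; positivity
  have hcont : ContinuousOn rf (spectrum ℝ (D ^ 2)) :=
    ContinuousOn.inv₀ (by fun_prop) hnz
  have h1 : A = cfc (fun t : ℝ => 1 + α * t) (D ^ 2) := by
    rw [cfc_const_add 1 (fun t : ℝ => α * t) (D ^ 2), cfc_const_mul_id α (D ^ 2)]
    simp [hAdef, Algebra.algebraMap_eq_smul_one, Complex.coe_smul]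
  have hAR : A * R = 1 := by
    rw [h1, hRdef, ← cfc_mul (fun t : ℝ => 1 + α * t) rf (D ^ 2) (by fun_prop) hcont,
      show (1 : H →L[ℂ] H) = cfc (fun _ : ℝ => (1:ℝ)) (D ^ 2) from (cfc_const_one ℝ _).symm]
    exact cfc_congr fun t ht => mul_inv_cancel₀ (hnz t ht)
  have hRA : R * A = 1 := by
    rw [h1, hRdef, ← cfc_mul rf (fun t : ℝ => 1 + α * t) (D ^ 2) hcont (by fun_prop),
      show (1 : H →L[ℂ] H) = cfc (fun _ : ℝ => (1:ℝ)) (D ^ 2) from (cfc_const_one ℝ _).symm]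
    exact cfc_congr fun t ht => inv_mul_cancel₀ (hnz t ht)
  set u : (H →L[ℂ] H)ˣ := ⟨A, R, hAR, hRA⟩ with hu
  have hinv : Ring.inverse A = R := by
    have : A = (u : H →L[ℂ] H) := rfl
    rw [this, Ring.inverse_unit u]; rfl
  refine ⟨hinv, ?_⟩
  -- D commutes with R
  have hcommDA : Commute A D := by
    have h2 : Commute (D ^ 2) D := (Commute.refl D).pow_left 2
    exact ((Commute.one_left D).add_left (h2.smul_left _))
  have hDR : D * R = R * D := by
    have : Commute D (↑u⁻¹ : H →L[ℂ] H) := (hcommDA.symm).units_inv_right (u := u)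
    exact this
  -- R is selfadjoint, norm ≤ 1
  have hRsa : IsSelfAdjoint R := cfc_predicate rf (D ^ 2)
  have hRnorm : ‖R‖ ≤ 1 := by
    apply norm_cfc_le zero_le_one
    intro t ht
    have h0 := hnneg t ht
    rw [Real.norm_eq_abs, abs_inv, abs_of_pos (by positivity)]
    rw [inv_le_one_iff₀]; right; nlinarith
  -- bound on α • (D * R)
  have hDRbound : ‖α • (D * R)‖ ≤ (Real.sqrt (N - C))⁻¹ := by
    have hTsa : IsSelfAdjoint (D * R) := by
      rw [IsSelfAdjoint, star_mul, hRsa.star_eq, hD.star_eq, hDR]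
    have hsq : (α • (D * R)) * (α • (D * R))
        = cfc (fun t : ℝ => (α * α) * (t * (rf t * rf t))) (D ^ 2) := by
      rw [smul_mul_smul_comm]
      have hT2 : (D * R) * (D * R) = D ^ 2 * (R * R) := by
        calc (D * R) * (D * R) = D * (R * D) * R := by noncomm_ring
        _ = D * (D * R) * R := by rw [hDR]
        _ = D ^ 2 * (R * R) := by noncomm_ring
      rw [hT2]
      have hcfc : cfc (fun t : ℝ => (α * α) * (t * (rf t * rf t))) (D ^ 2)
          = (α * α) • (D ^ 2 * (R * R)) := by
        have e1 : (fun t : ℝ => (α * α) * (t * (rf t * rf t)))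
            = fun t : ℝ => (α * α) • ((fun s : ℝ => s * (rf s * rf s)) t) := by
          funext t; simp [smul_eq_mul]
        rw [e1, cfc_smul (α * α) (fun s : ℝ => s * (rf s * rf s)) (D ^ 2)
            (by exact (continuousOn_id' _).mul (hcont.mul hcont)),
          cfc_mul (fun s : ℝ => s) (fun s => rf s * rf s) (D ^ 2)
            (by fun_prop) (hcont.mul hcont),
          cfc_mul rf rf (D ^ 2) hcont hcont, cfc_id' ℝ (D ^ 2)]
      rw [hcfc]
    have hnormsq : ‖α • (D * R)‖ * ‖α • (D * R)‖ ≤ (N - C)⁻¹ := by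
      have hstar : star (α • (D * R)) = α • (D * R) := by
        rw [star_smul]; simp [hTsa.star_eq]
      calc ‖α • (D * R)‖ * ‖α • (D * R)‖ = ‖star (α • (D * R)) * (α • (D * R))‖ :=
            (CStarRing.norm_star_mul_self).symm
        _ = ‖cfc (fun t : ℝ => (α * α) * (t * (rf t * rf t))) (D ^ 2)‖ := by rw [hstar, hsq]
        _ ≤ (N - C)⁻¹ := by
            apply norm_cfc_le (by positivity)
            intro t ht
            rcases hspecR t ht with h | h
            · simp [h, abs_of_nonneg, inv_nonneg.mpr hNC'.le]
            · have ht0 : 0 < t := lt_of_lt_of_le hNC' h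
              have h1t : (0:ℝ) < 1 + α * t := by positivity
              rw [Real.norm_eq_abs, abs_of_nonneg (by positivity)]
              show α * α * (t * ((1 + α * t)⁻¹ * (1 + α * t)⁻¹)) ≤ (N - C)⁻¹
              have hu : (1 + α * t)⁻¹ ≤ (α * t)⁻¹ := by
                apply inv_anti₀ (by positivity); linarith
              have hu0 : (0:ℝ) ≤ (1 + α * t)⁻¹ := by positivity
              calc α * α * (t * ((1 + α * t)⁻¹ * (1 + α * t)⁻¹))
                  ≤ α * α * (t * ((α * t)⁻¹ * (α * t)⁻¹)) := by gcongr
                _ = t⁻¹ := by field_simp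
                _ ≤ (N - C)⁻¹ := inv_anti₀ hNC' h
    rw [← Real.sqrt_inv]
    rw [Real.le_sqrt (norm_nonneg _) (by positivity)]
    nlinarith [norm_nonneg (α • (D * R))]
  -- commutator identity
  have e1 : f * R = R * ((A * f) * R) := by
    conv_lhs => rw [← one_mul (f * R), ← hRA]
    noncomm_ring
  have e2 : R * f = R * ((f * A) * R) := by
    conv_lhs => rw [← mul_one (R * f), ← hAR]
    noncomm_ring
  have hAf : A * f - f * A = ((α : ℂ) * Complex.I) • (D * g + g * D) := by
    rw [hAdef]
    rw [add_mul, mul_add, one_mul, mul_one, smul_mul_assoc, mul_smul_comm]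
    rw [show f + (α : ℂ) • (D ^ 2 * f) - (f + (α : ℂ) • (f * D ^ 2))
        = (α : ℂ) • (D ^ 2 * f - f * D ^ 2) by rw [smul_sub]; abel]
    rw [hcomm, smul_smul]
  have hE : f * R - R * f = ((α : ℂ) * Complex.I) • (R * ((D * g + g * D) * R)) := by
    rw [e1, e2, ← mul_sub, ← sub_mul, hAf, smul_mul_assoc, mul_smul_comm]
  rw [hE]
  have hsplit : R * ((D * g + g * D) * R) = (R * D) * (g * R) + (R * g) * (D * R) := by
    noncomm_ring
  have hαI : ‖(α : ℂ) * Complex.I‖ = α := by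
    simp [abs_of_pos hα]
  have hX : ‖R * ((D * g + g * D) * R)‖ ≤ 2 * ‖D * R‖ * ‖g‖ := by
    rw [hsplit]
    calc ‖(R * D) * (g * R) + (R * g) * (D * R)‖
        ≤ ‖(R * D) * (g * R)‖ + ‖(R * g) * (D * R)‖ := norm_add_le _ _
      _ ≤ ‖R * D‖ * (‖g‖ * ‖R‖) + (‖R‖ * ‖g‖) * ‖D * R‖ := by
          gcongr <;> first
            | exact (norm_mul_le _ _).trans (by gcongr; exact norm_mul_le _ _)
            | exact norm_mul_le _ _
      _ ≤ ‖D * R‖ * (‖g‖ * 1) + (1 * ‖g‖) * ‖D * R‖ := by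
          rw [← hDR]; gcongr <;> simp [norm_nonneg]
      _ = 2 * ‖D * R‖ * ‖g‖ := by ring
  calc ‖((α : ℂ) * Complex.I) • (R * ((D * g + g * D) * R))‖
      = α * ‖R * ((D * g + g * D) * R)‖ := by rw [norm_smul, hαI]
    _ ≤ α * (2 * ‖D * R‖ * ‖g‖) := by gcongr
    _ = 2 * (α * ‖D * R‖) * ‖g‖ := by ring
    _ = 2 * ‖α • (D * R)‖ * ‖g‖ := by
        rw [norm_smul, Real.norm_eq_abs, abs_of_pos hα]
    _ ≤ 2 * (Real.sqrt (N - C))⁻¹ * ‖g‖ := by gcongr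

set_option maxHeartbeats 1000000 in
lemma aux_proj {H : Type*} [NormedAddCommGroup H] [InnerProductSpace ℂ H] [CompleteSpace H]
    (D : H →L[ℂ] H) (hD : IsSelfAdjoint D) (N C : ℝ) (hNC : C < N)
    (hspecR : ∀ t ∈ spectrum ℝ (D ^ 2), t = 0 ∨ N - C ≤ t)
    (Pr : H →L[ℂ] H) (hPidem : IsIdempotentElem Pr) (hPsa : IsSelfAdjoint Pr)
    (hPrange : LinearMap.range (Pr : H →ₗ[ℂ] H) = LinearMap.ker (D : H →ₗ[ℂ] H)) :
    Pr = cfc (fun t : ℝ => 1 - t * (max t (N - C))⁻¹) (D ^ 2) := by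
  have hNC' : (0:ℝ) < N - C := by linarith
  have hsa : IsSelfAdjoint (D ^ 2) := hD.pow 2
  set h : ℝ → ℝ := fun t => 1 - t * (max t (N - C))⁻¹ with hh
  set k : ℝ → ℝ := fun t => (max t (N - C))⁻¹ with hk
  have hkcont : Continuous k := by
    apply Continuous.inv₀ (by fun_prop)
    intro t; have : N - C ≤ max t (N - C) := le_max_right _ _; positivity
  have hhcont : Continuous h := by
    apply Continuous.sub continuous_const
    exact continuous_id.mul hkcont
  have hspec01 : ∀ t ∈ spectrum ℝ (D ^ 2), h t = 1 ∨ h t = 0 := by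
    intro t ht
    rcases hspecR t ht with h0 | h1
    · left; simp [hh, h0]
    · right; simp only [hh]
      rw [max_eq_left h1, mul_inv_cancel₀ (ne_of_gt (by linarith)), sub_self]
  set Q : H →L[ℂ] H := cfc h (D ^ 2) with hQ
  have hQsa : IsSelfAdjoint Q := cfc_predicate h (D ^ 2)
  have hQidem : Q * Q = Q := by
    rw [hQ, ← cfc_mul h h (D ^ 2) hhcont.continuousOn hhcont.continuousOn]
    apply cfc_congr
    intro t ht
    rcases hspec01 t ht with h' | h' <;> simp [h']
  -- ker D = ker (D^2) pointwise
  have hker : ∀ x : H, D x = 0 ↔ (D ^ 2) x = 0 := by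
    intro x
    constructor
    · intro hx; rw [pow_two]; simp [ContinuousLinearMap.mul_apply, hx]
    · intro hx
      have : inner ℂ (D x) (D x) = (0 : ℂ) := by
        have h1 : inner ℂ ((D ^ 2) x) x = (0 : ℂ) := by rw [hx]; simp
        have e := ContinuousLinearMap.adjoint_inner_left D x (D x)
        rw [hD.adjoint_eq] at e
        rw [← e, ← ContinuousLinearMap.mul_apply, ← pow_two, h1]
      exact inner_self_eq_zero.mp this
  -- D^2 * Q = 0
  have hD2Q : D ^ 2 * Q = 0 := by
    have : D ^ 2 * Q = cfc (fun t : ℝ => t * h t) (D ^ 2) := by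
      rw [hQ, cfc_mul (fun t : ℝ => t) h (D ^ 2) (by fun_prop) hhcont.continuousOn,
        cfc_id' ℝ (D ^ 2)]
    rw [this, ← cfc_zero ℝ (D ^ 2)]
    apply cfc_congr
    intro t ht
    rcases hspecR t ht with h0 | h1
    · simp [h0]
    · have : h t = 0 := by
        simp only [hh]; rw [max_eq_left h1, mul_inv_cancel₀ (ne_of_gt (by linarith)), sub_self]
      simp [this]
  -- 1 - Q = cfc k * D^2
  have honeQ : 1 - Q = cfc k (D ^ 2) * D ^ 2 := by
    rw [hQ, ← cfc_one ℝ (D ^ 2), ← cfc_sub _ _ (D ^ 2) (by fun_prop) hhcont.continuousOn]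
    rw [show cfc k (D ^ 2) * D ^ 2 = cfc (fun t : ℝ => k t * t) (D ^ 2) by
      rw [cfc_mul k (fun t : ℝ => t) (D ^ 2) hkcont.continuousOn (by fun_prop),
        cfc_id' ℝ (D ^ 2)]]
    apply cfc_congr
    intro t ht
    simp only [hh, hk, Pi.one_apply]
    ring
  -- range Q = ker D^2
  have hrange1 : ∀ x : H, (D ^ 2) (Q x) = 0 := by
    intro x
    have := congrArg (fun T : H →L[ℂ] H => T x) hD2Q
    simpa [ContinuousLinearMap.mul_apply] using this
  have hrange2 : ∀ x : H, (D ^ 2) x = 0 → Q x = x := by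
    intro x hx
    have := congrArg (fun T : H →L[ℂ] H => T x) honeQ
    simp only [ContinuousLinearMap.sub_apply, ContinuousLinearMap.one_apply,
      ContinuousLinearMap.mul_apply, hx, map_zero] at this
    linear_combination (norm := module) -this
  -- now show Pr = Q
  ext x
  have hPrx : D (Pr x) = 0 := by
    have : Pr x ∈ LinearMap.range (Pr : H →ₗ[ℂ] H) := ⟨x, rfl⟩
    rw [hPrange] at this
    exact this
  have hQPrx : Q (Pr x) = Pr x := hrange2 _ ((hker _).mp hPrx)
  have hperp : Pr (x - Pr x) = 0 := by
    have := congrArg (fun T : H →L[ℂ] H => T x) hPidem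
    simp only [ContinuousLinearMap.mul_apply] at this
    simp [map_sub, this]
  have hQu : Q (x - Pr x) = 0 := by
    set u := x - Pr x with hu
    have h1 : inner ℂ (Q u) (Q u) = (0 : ℂ) := by
      have e1 : (inner ℂ (Q u) (Q u) : ℂ) = inner ℂ u (Q (Q u)) := by
        have := ContinuousLinearMap.adjoint_inner_left Q (Q u) u
        rwa [hQsa.adjoint_eq] at this
      rw [e1]
      -- Q (Q u) ∈ range Q ⊆ ker D = range Pr
      have hQQu : D (Q (Q u)) = 0 := (hker _).mpr (hrange1 (Q u))
      have : Q (Q u) ∈ LinearMap.range (Pr : H →ₗ[ℂ] H) := by rw [hPrange]; exact hQQu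
      obtain ⟨z, hz⟩ := this
      rw [← hz]
      change inner ℂ u (Pr z) = 0
      rw [← hPsa.adjoint_eq, ContinuousLinearMap.adjoint_inner_right, hperp]
      simp
    exact inner_self_eq_zero.mp h1
  have hQx : Q x = Q (Pr x) + Q (x - Pr x) := by rw [← map_add]; congr 1; abel
  show Pr x = Q x
  rw [hQx, hQPrx, hQu, add_zero]

set_option maxHeartbeats 1000000 in
lemma aux_QR {H : Type*} [NormedAddCommGroup H] [InnerProductSpace ℂ H] [CompleteSpace H]
    (D : H →L[ℂ] H) (hD : IsSelfAdjoint D) (N C : ℝ) (hNC : C < N)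
    (hspecR : ∀ t ∈ spectrum ℝ (D ^ 2), t = 0 ∨ N - C ≤ t)
    (α : ℝ) (hα : 0 < α) :
    ‖cfc (fun t : ℝ => 1 - t * (max t (N - C))⁻¹) (D ^ 2)
      - cfc (fun t : ℝ => (1 + α * t)⁻¹) (D ^ 2)‖ ≤ α⁻¹ * (N - C)⁻¹ := by
  have hNC' : (0:ℝ) < N - C := by linarith
  have hsa : IsSelfAdjoint (D ^ 2) := hD.pow 2
  have hnneg : ∀ t ∈ spectrum ℝ (D ^ 2), 0 ≤ t := by
    intro t ht; rcases hspecR t ht with h | h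
    · simp [h]
    · linarith
  have hkcont : Continuous (fun t : ℝ => 1 - t * (max t (N - C))⁻¹) := by
    apply Continuous.sub continuous_const
    apply continuous_id.mul
    apply Continuous.inv₀ (by fun_prop)
    intro t; have : N - C ≤ max t (N - C) := le_max_right _ _; positivity
  have hcont : ContinuousOn (fun t : ℝ => (1 + α * t)⁻¹) (spectrum ℝ (D ^ 2)) := by
    apply ContinuousOn.inv₀ (by fun_prop)
    intro t ht; have := hnneg t ht; positivity
  rw [← cfc_sub _ _ (D ^ 2) hkcont.continuousOn hcont]
  apply norm_cfc_le (by positivity)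
  intro t ht
  rcases hspecR t ht with h0 | h1
  · simp [h0]; positivity
  · have ht0 : 0 < t := lt_of_lt_of_le hNC' h1
    have h1t : (0:ℝ) < 1 + α * t := by positivity
    have hzero : 1 - t * (max t (N - C))⁻¹ = 0 := by
      rw [max_eq_left h1, mul_inv_cancel₀ (ne_of_gt ht0), sub_self]
    rw [hzero, zero_sub, norm_neg, Real.norm_eq_abs, abs_of_pos (by positivity)]
    calc (1 + α * t)⁻¹ ≤ (α * t)⁻¹ := by
          apply inv_anti₀ (by positivity); linarith
      _ = α⁻¹ * t⁻¹ := by rw [mul_inv]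
      _ ≤ α⁻¹ * (N - C)⁻¹ := by gcongr

set_option maxHeartbeats 1000000 in
theorem commutator_kernel_projection_bound
    {H : Type*} [NormedAddCommGroup H] [InnerProductSpace ℂ H] [CompleteSpace H]
    (D : H →L[ℂ] H) (hD : IsSelfAdjoint D)
    (N C : ℝ) (hNC : C < N)
    (hspec : spectrum ℂ (D ^ 2) ⊆
      {z : ℂ | z = 0 ∨ (z.im = 0 ∧ N - C ≤ z.re)})
    (f g : H →L[ℂ] H)
    (hcomm : D ^ 2 * f - f * D ^ 2 = Complex.I • (D * g + g * D))
    (Pr : H →L[ℂ] H) (hPidem : IsIdempotentElem Pr) (hPsa : IsSelfAdjoint Pr)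
    (hPrange : LinearMap.range (Pr : H →ₗ[ℂ] H) = LinearMap.ker (D : H →ₗ[ℂ] H)) :
    (∀ α : ℝ, 0 < α →
      ‖f * Ring.inverse (1 + (α : ℂ) • D ^ 2)
        - Ring.inverse (1 + (α : ℂ) • D ^ 2) * f‖ ≤ 2 * (Real.sqrt (N - C))⁻¹ * ‖g‖) ∧
    (∀ α : ℝ, 0 < α →
      ‖f * Pr - Pr * f‖ ≤ 2 * (Real.sqrt (N - C))⁻¹ * ‖g‖ + 2 * α⁻¹ * (N - C)⁻¹ * ‖f‖) ∧
    ‖f * Pr - Pr * f‖ ≤ 2 * (Real.sqrt (N - C))⁻¹ * ‖g‖ := by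
  have hNC' : (0:ℝ) < N - C := by linarith
  have hspecR : ∀ t ∈ spectrum ℝ (D ^ 2), t = 0 ∨ N - C ≤ t := by
    intro t ht
    have h2 : (t : ℂ) ∈ spectrum ℂ (D ^ 2) := by
      rw [← Complex.coe_algebraMap]
      exact spectrum.algebraMap_mem ℂ ht
    rcases hspec h2 with h | h
    · left; exact_mod_cast h
    · right; simpa using h.2
  have part1 : ∀ α : ℝ, 0 < α →
      ‖f * Ring.inverse (1 + (α : ℂ) • D ^ 2)
        - Ring.inverse (1 + (α : ℂ) • D ^ 2) * f‖ ≤ 2 * (Real.sqrt (N - C))⁻¹ * ‖g‖ := by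
    intro α hα
    obtain ⟨hinv, hbd⟩ := aux_resolvent D hD N C hNC hspecR f g hcomm α hα
    rw [hinv]
    exact hbd
  have part2 : ∀ α : ℝ, 0 < α →
      ‖f * Pr - Pr * f‖ ≤ 2 * (Real.sqrt (N - C))⁻¹ * ‖g‖ + 2 * α⁻¹ * (N - C)⁻¹ * ‖f‖ := by
    intro α hα
    obtain ⟨hinv, hbd⟩ := aux_resolvent D hD N C hNC hspecR f g hcomm α hα
    have hPQ := aux_proj D hD N C hNC hspecR Pr hPidem hPsa hPrange
    have hQR := aux_QR D hD N C hNC hspecR α hα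
    set R : H →L[ℂ] H := cfc (fun t : ℝ => (1 + α * t)⁻¹) (D ^ 2) with hR
    set Q : H →L[ℂ] H := cfc (fun t : ℝ => 1 - t * (max t (N - C))⁻¹) (D ^ 2) with hQ
    have hid : f * Pr - Pr * f = (f * R - R * f) + (f * (Q - R) - (Q - R) * f) := by
      rw [hPQ]; noncomm_ring
    rw [hid]
    calc ‖(f * R - R * f) + (f * (Q - R) - (Q - R) * f)‖
        ≤ ‖f * R - R * f‖ + (‖f * (Q - R)‖ + ‖(Q - R) * f‖) :=
          (norm_add_le _ _).trans (by gcongr; exact norm_sub_le _ _)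
      _ ≤ 2 * (Real.sqrt (N - C))⁻¹ * ‖g‖ + (‖f‖ * ‖Q - R‖ + ‖Q - R‖ * ‖f‖) := by
          gcongr <;> exact norm_mul_le _ _
      _ ≤ 2 * (Real.sqrt (N - C))⁻¹ * ‖g‖
          + (‖f‖ * (α⁻¹ * (N - C)⁻¹) + (α⁻¹ * (N - C)⁻¹) * ‖f‖) := by gcongr
      _ = 2 * (Real.sqrt (N - C))⁻¹ * ‖g‖ + 2 * α⁻¹ * (N - C)⁻¹ * ‖f‖ := by ring
  refine ⟨part1, part2, ?_⟩
  apply le_of_forall_pos_le_add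
  intro ε hε
  set α : ℝ := 2 * (N - C)⁻¹ * (‖f‖ + 1) / ε with hαdef
  have hα : 0 < α := by positivity
  refine (part2 α hα).trans ?_
  have hle : 2 * α⁻¹ * (N - C)⁻¹ * ‖f‖ ≤ ε := by
    rw [hαdef, inv_div]
    have hX : (0:ℝ) < 2 * (N - C)⁻¹ * (‖f‖ + 1) := by positivity
    calc 2 * (ε / (2 * (N - C)⁻¹ * (‖f‖ + 1))) * (N - C)⁻¹ * ‖f‖
        = (ε / (2 * (N - C)⁻¹ * (‖f‖ + 1))) * (2 * (N - C)⁻¹ * ‖f‖) := by ring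
      _ ≤ (ε / (2 * (N - C)⁻¹ * (‖f‖ + 1))) * (2 * (N - C)⁻¹ * (‖f‖ + 1)) := by
          apply mul_le_mul_of_nonneg_left _ (div_nonneg hε.le hX.le)
          gcongr
          linarith
      _ = ε := div_mul_cancel₀ ε (ne_of_gt hX)
  linarith
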